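/- Let K₁, K₂, K₃ ∈ ℝ and define on (0, ∞): p₁(t) = t^{2/3} + (1/3)(K₁+K₂)t^{−1/3}, p₂(t) = t^{2/3} + (1/3)(K₂−2K₁)t^{−1/3}, p₃(t) = t^{2/3} + (1/3)(K₁−2K₂)t^{−1/3}, and λ(t) = −(2/3)t² + (4/9)(K₁²+K₂²−K₁K₂)·log t + (4/81)(K₁+K₂)(K₂−2K₁)(K₁−2K₂)·(1/t) + K₃. Then for every t > 0: (i) λ has derivative λ'(t) = −(4/(3t))·p₁(t)·p₂(t)·p₃(t) at t; and (ii) for every cyclic permutation (i, j, k) of (1, 2, 3), if pⱼ(t) ≠ 0 and pₖ(t) ≠ 0 then the function t ↦ pᵢ(t)² has derivative ( −1/(2pⱼ(t)) − 1/(2pₖ(t)) )·λ'(t) at t. Consequently, wherever p₁, p₂, p₃ > 0 and λ' ≠ 0 this parametrized family solves the renormalisation flow equation d(pᵢ²)/dλ = −1/(2pⱼ) − 1/(2pₖ). -/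

import Mathlib

/-- `p₁(t) = t^{2/3} + (1/3)(K₁+K₂)t^{−1/3}`. -/
noncomputable def rp1 (K1 K2 t : ℝ) : ℝ :=
  t ^ ((2 : ℝ) / 3) + (1 / 3) * (K1 + K2) * t ^ (-(1 : ℝ) / 3)

/-- `p₂(t) = t^{2/3} + (1/3)(K₂−2K₁)t^{−1/3}`. -/
noncomputable def rp2 (K1 K2 t : ℝ) : ℝ :=
  t ^ ((2 : ℝ) / 3) + (1 / 3) * (K2 - 2 * K1) * t ^ (-(1 : ℝ) / 3)

/-- `p₃(t) = t^{2/3} + (1/3)(K₁−2K₂)t^{−1/3}`. -/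
noncomputable def rp3 (K1 K2 t : ℝ) : ℝ :=
  t ^ ((2 : ℝ) / 3) + (1 / 3) * (K1 - 2 * K2) * t ^ (-(1 : ℝ) / 3)

/-- `λ(t) = −(2/3)t² + (4/9)(K₁²+K₂²−K₁K₂)log t + (4/81)(K₁+K₂)(K₂−2K₁)(K₁−2K₂)(1/t) + K₃`. -/
noncomputable def rlam (K1 K2 K3 t : ℝ) : ℝ :=
  -(2 / 3) * t ^ 2 + (4 / 9) * (K1 ^ 2 + K2 ^ 2 - K1 * K2) * Real.log t
    + (4 / 81) * ((K1 + K2) * (K2 - 2 * K1) * (K1 - 2 * K2)) * (1 / t) + K3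

private lemma rp_aux (c t : ℝ) (ht : 0 < t) :
    HasDerivAt (fun s : ℝ => s ^ ((2 : ℝ) / 3) + (1 / 3) * c * s ^ (-(1 : ℝ) / 3))
      ((2 : ℝ) / 3 * t ^ ((2 : ℝ) / 3 - 1)
        + 1 / 3 * c * (-(1 : ℝ) / 3 * t ^ (-(1 : ℝ) / 3 - 1))) t := by
  have h1 := Real.hasDerivAt_rpow_const (x := t) (p := (2 : ℝ) / 3) (Or.inl ht.ne')
  have h2 := Real.hasDerivAt_rpow_const (x := t) (p := -(1 : ℝ) / 3) (Or.inl ht.ne')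
  exact h1.add (h2.const_mul (1 / 3 * c))


private lemma frac_form (c u : ℝ) (hu : u ≠ 0) :
    u ^ 2 + 1 / 3 * c * u⁻¹ = (3 * u ^ 3 + c) / (3 * u) := by
  field_simp

private lemma num_ne (a b : ℝ) (h : a / b ≠ 0) : a ≠ 0 := by
  intro hz; exact h (by rw [hz, zero_div])

set_option maxHeartbeats 1000000 in
/-- the explicit parametrized solution of the renormalisation flow:
`λ'(t) = −(4/(3t))p₁p₂p₃` and `d(pᵢ²)/dt = (−1/(2pⱼ) − 1/(2pₖ))·λ'(t)` for every cyclic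
permutation `(i,j,k)` of `(1,2,3)`. -/
theorem statement19 (K1 K2 K3 : ℝ) : ∀ t : ℝ, 0 < t →
    HasDerivAt (rlam K1 K2 K3)
      (-(4 / (3 * t)) * rp1 K1 K2 t * rp2 K1 K2 t * rp3 K1 K2 t) t ∧
    (rp2 K1 K2 t ≠ 0 → rp3 K1 K2 t ≠ 0 →
      HasDerivAt (fun s => rp1 K1 K2 s ^ 2)
        ((-1 / (2 * rp2 K1 K2 t) - 1 / (2 * rp3 K1 K2 t)) *
          (-(4 / (3 * t)) * rp1 K1 K2 t * rp2 K1 K2 t * rp3 K1 K2 t)) t) ∧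
    (rp3 K1 K2 t ≠ 0 → rp1 K1 K2 t ≠ 0 →
      HasDerivAt (fun s => rp2 K1 K2 s ^ 2)
        ((-1 / (2 * rp3 K1 K2 t) - 1 / (2 * rp1 K1 K2 t)) *
          (-(4 / (3 * t)) * rp1 K1 K2 t * rp2 K1 K2 t * rp3 K1 K2 t)) t) ∧
    (rp1 K1 K2 t ≠ 0 → rp2 K1 K2 t ≠ 0 →
      HasDerivAt (fun s => rp3 K1 K2 s ^ 2)
        ((-1 / (2 * rp1 K1 K2 t) - 1 / (2 * rp2 K1 K2 t)) *
          (-(4 / (3 * t)) * rp1 K1 K2 t * rp2 K1 K2 t * rp3 K1 K2 t)) t) := by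
  intro t ht
  set u : ℝ := t ^ ((1 : ℝ) / 3) with hu_def
  have hu : 0 < u := Real.rpow_pos_of_pos ht _
  have htu : t = u ^ 3 := by
    rw [hu_def, ← Real.rpow_natCast (t ^ ((1 : ℝ) / 3)) 3, ← Real.rpow_mul ht.le]
    norm_num
  have h23 : t ^ ((2 : ℝ) / 3) = u ^ 2 := by
    rw [hu_def, ← Real.rpow_natCast (t ^ ((1 : ℝ) / 3)) 2, ← Real.rpow_mul ht.le]
    norm_num
  have h13 : t ^ (-(1 : ℝ) / 3) = u⁻¹ := by
    rw [hu_def, show -(1 : ℝ) / 3 = -((1 : ℝ) / 3) by ring, Real.rpow_neg ht.le]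
  have hm : t ^ ((2 : ℝ) / 3 - 1) = u⁻¹ := by
    rw [show (2 : ℝ) / 3 - 1 = -((1 : ℝ) / 3) by ring, Real.rpow_neg ht.le, hu_def]
  have hm2 : t ^ (-(1 : ℝ) / 3 - 1) = (u ^ 4)⁻¹ := by
    rw [show -(1 : ℝ) / 3 - 1 = -((4 : ℝ) / 3) by ring, Real.rpow_neg ht.le, hu_def,
      ← Real.rpow_natCast (t ^ ((1 : ℝ) / 3)) 4, ← Real.rpow_mul ht.le]
    norm_num
  have hp1 : HasDerivAt (rp1 K1 K2)
      ((2 : ℝ) / 3 * t ^ ((2 : ℝ) / 3 - 1)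
        + 1 / 3 * (K1 + K2) * (-(1 : ℝ) / 3 * t ^ (-(1 : ℝ) / 3 - 1))) t :=
    rp_aux (K1 + K2) t ht
  have hp2 : HasDerivAt (rp2 K1 K2)
      ((2 : ℝ) / 3 * t ^ ((2 : ℝ) / 3 - 1)
        + 1 / 3 * (K2 - 2 * K1) * (-(1 : ℝ) / 3 * t ^ (-(1 : ℝ) / 3 - 1))) t :=
    rp_aux (K2 - 2 * K1) t ht
  have hp3 : HasDerivAt (rp3 K1 K2)
      ((2 : ℝ) / 3 * t ^ ((2 : ℝ) / 3 - 1)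
        + 1 / 3 * (K1 - 2 * K2) * (-(1 : ℝ) / 3 * t ^ (-(1 : ℝ) / 3 - 1))) t :=
    rp_aux (K1 - 2 * K2) t ht
  refine ⟨?_, ?_, ?_, ?_⟩
  · -- derivative of rlam
    have hA : HasDerivAt (fun s : ℝ => -(2 / 3) * s ^ 2) (-(2 / 3) * (2 * t)) t := by
      simpa using (hasDerivAt_pow 2 t).const_mul (-(2 / 3) : ℝ)
    have hB : HasDerivAt
        (fun s : ℝ => (4 / 9) * (K1 ^ 2 + K2 ^ 2 - K1 * K2) * Real.log s)
        ((4 / 9) * (K1 ^ 2 + K2 ^ 2 - K1 * K2) * t⁻¹) t :=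
      (Real.hasDerivAt_log ht.ne').const_mul _
    have hC : HasDerivAt
        (fun s : ℝ => (4 / 81) * ((K1 + K2) * (K2 - 2 * K1) * (K1 - 2 * K2)) * (1 / s))
        ((4 / 81) * ((K1 + K2) * (K2 - 2 * K1) * (K1 - 2 * K2)) * (-(t ^ 2)⁻¹)) t := by
      simpa [one_div] using (hasDerivAt_inv ht.ne').const_mul
        ((4 / 81) * ((K1 + K2) * (K2 - 2 * K1) * (K1 - 2 * K2)))
    have h : HasDerivAt (rlam K1 K2 K3)
        (-(2 / 3) * (2 * t) + (4 / 9) * (K1 ^ 2 + K2 ^ 2 - K1 * K2) * t⁻¹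
          + (4 / 81) * ((K1 + K2) * (K2 - 2 * K1) * (K1 - 2 * K2)) * (-(t ^ 2)⁻¹)) t :=
      ((hA.add hB).add hC).add_const K3
    convert h using 1
    simp only [rp1, rp2, rp3, h23, h13]
    rw [htu]
    field_simp
    ring
  · intro h2 h3
    have : HasDerivAt (fun s => rp1 K1 K2 s ^ 2) _ t := hp1.fun_pow 2
    convert this using 1
    simp only [rp1, rp2, rp3, h23, h13, hm, hm2, pow_one, Nat.cast_ofNat] at h2 h3 ⊢
    rw [frac_form (K2 - 2 * K1) u hu.ne'] at h2
    rw [frac_form (K1 - 2 * K2) u hu.ne'] at h3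
    have h2' : 3 * u ^ 3 + (K2 - 2 * K1) ≠ 0 := num_ne _ _ h2
    have h3' : 3 * u ^ 3 + (K1 - 2 * K2) ≠ 0 := num_ne _ _ h3
    rw [frac_form (K1 + K2) u hu.ne', frac_form (K2 - 2 * K1) u hu.ne',
      frac_form (K1 - 2 * K2) u hu.ne', htu]
    have hu0 : u ≠ 0 := hu.ne'
    field_simp
    ring_nf
    field_simp
    ring
  · intro h2 h3
    have : HasDerivAt (fun s => rp2 K1 K2 s ^ 2) _ t := hp2.fun_pow 2
    convert this using 1
    simp only [rp1, rp2, rp3, h23, h13, hm, hm2, pow_one, Nat.cast_ofNat] at h2 h3 ⊢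
    rw [frac_form (K1 - 2 * K2) u hu.ne'] at h2
    rw [frac_form (K1 + K2) u hu.ne'] at h3
    have h2' : 3 * u ^ 3 + (K1 - 2 * K2) ≠ 0 := num_ne _ _ h2
    have h3' : 3 * u ^ 3 + (K1 + K2) ≠ 0 := num_ne _ _ h3
    rw [frac_form (K1 + K2) u hu.ne', frac_form (K2 - 2 * K1) u hu.ne',
      frac_form (K1 - 2 * K2) u hu.ne', htu]
    have hu0 : u ≠ 0 := hu.ne'
    field_simp
    ring_nf
    field_simp
    ring
  · intro h2 h3
    have : HasDerivAt (fun s => rp3 K1 K2 s ^ 2) _ t := hp3.fun_pow 2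
    convert this using 1
    simp only [rp1, rp2, rp3, h23, h13, hm, hm2, pow_one, Nat.cast_ofNat] at h2 h3 ⊢
    rw [frac_form (K1 + K2) u hu.ne'] at h2
    rw [frac_form (K2 - 2 * K1) u hu.ne'] at h3
    have h2' : 3 * u ^ 3 + (K1 + K2) ≠ 0 := num_ne _ _ h2
    have h3' : 3 * u ^ 3 + (K2 - 2 * K1) ≠ 0 := num_ne _ _ h3
    rw [frac_form (K1 + K2) u hu.ne', frac_form (K2 - 2 * K1) u hu.ne',
      frac_form (K1 - 2 * K2) u hu.ne', htu]
    have hu0 : u ≠ 0 := hu.ne'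
    field_simp
    ring_nf
    field_simp
    ring
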